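/- arXiv:1406.6521 — 3 statements merged into one kernel-verified Lean document; each statement's English description precedes it below -/
import Mathlib

section
/- Let Z ~ Beta(r, n-r+1) with positive integers 1 < r ≤ n. Then E[log(-log(1-Z))] = (1/B(r, n-r+1)) · Σ_{j=0}^{r-1} C(r-1, j) (-1)^j · (-1/(n-r+1+j)) · (C + log(n-r+1+j)), where C is the Euler–Mascheroni constant. -/
open Real MeasureTheory
open Set

lemma my_abs_log_le {t : ℝ} (ht : 0 < t) :
    |Real.log t| ≤ 2 * t ^ (1/2 : ℝ) + 2 * t ^ (-(1/2) : ℝ) := by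
  have p1 : (0:ℝ) < t ^ (1/2 : ℝ) := Real.rpow_pos_of_pos ht _
  have p2 : (0:ℝ) < t ^ (-(1/2) : ℝ) := Real.rpow_pos_of_pos ht _
  have h1 : Real.log t ≤ 2 * t ^ (1/2 : ℝ) := by
    have := Real.log_le_rpow_div ht.le (by norm_num : (0:ℝ) < 1/2)
    rw [div_div_eq_mul_div, div_eq_mul_inv] at this
    nlinarith
  have h2 : -Real.log t ≤ 2 * t ^ (-(1/2) : ℝ) := by
    have := Real.log_le_rpow_div (inv_nonneg.mpr ht.le) (by norm_num : (0:ℝ) < 1/2)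
    rw [Real.log_inv, Real.inv_rpow ht.le, ← Real.rpow_neg ht.le] at this
    nlinarith
  rw [abs_le]
  constructor <;> nlinarith

lemma my_integrable_log_exp {b : ℝ} (hb : 0 < b) :
    IntegrableOn (fun t : ℝ => Real.log t * Real.exp (-(b * t))) (Ioi 0) := by
  have hi1 : IntegrableOn (fun t : ℝ => t ^ (1/2 : ℝ) * Real.exp (-b * t)) (Ioi 0) := by
    have := integrableOn_rpow_mul_exp_neg_mul_rpow (by norm_num : (-1:ℝ) < 1/2)
      (one_pos : (0:ℝ) < 1) hb
    simpa [Real.rpow_one] using this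
  have hi2 : IntegrableOn (fun t : ℝ => t ^ (-(1/2) : ℝ) * Real.exp (-b * t)) (Ioi 0) := by
    have := integrableOn_rpow_mul_exp_neg_mul_rpow (by norm_num : (-1:ℝ) < -(1/2))
      (one_pos : (0:ℝ) < 1) hb
    simpa [Real.rpow_one] using this
  have hg : IntegrableOn
      (fun t : ℝ => (2 * t ^ (1/2 : ℝ) + 2 * t ^ (-(1/2) : ℝ)) * Real.exp (-b * t)) (Ioi 0) := by
    have h := (hi1.const_mul 2).add (hi2.const_mul 2)
    exact IntegrableOn.congr_fun h (fun t _ => by simp only [Pi.add_apply]; ring) measurableSet_Ioi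
  refine Integrable.mono' hg ?_ ?_
  · exact (Real.measurable_log.mul (by fun_prop)).aestronglyMeasurable
  · filter_upwards [ae_restrict_mem measurableSet_Ioi] with t ht
    have hexp : (0:ℝ) < Real.exp (-(b*t)) := Real.exp_pos _
    rw [Real.norm_eq_abs, abs_mul, abs_of_pos hexp]
    have := my_abs_log_le (t := t) ht
    have : |Real.log t| * Real.exp (-(b*t)) ≤
        (2 * t ^ (1/2 : ℝ) + 2 * t ^ (-(1/2) : ℝ)) * Real.exp (-(b*t)) :=
      mul_le_mul_of_nonneg_right this hexp.le
    simpa [neg_mul] using this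

lemma my_integral_log_exp_one :
    ∫ t in Ioi (0:ℝ), Real.log t * Real.exp (-t) = -Real.eulerMascheroniConstant := by
  have h1 := Complex.hasDerivAt_GammaIntegral (s := 1) (by norm_num)
  have heq : Complex.Gamma =ᶠ[nhds (1:ℂ)] Complex.GammaIntegral := by
    filter_upwards [IsOpen.mem_nhds (isOpen_lt continuous_const Complex.continuous_re)
      (by norm_num : (0:ℂ).re < (1:ℂ).re)] with s hs
    exact Complex.Gamma_eq_integral hs
  have h2 : HasDerivAt Complex.GammaIntegral (-(Real.eulerMascheroniConstant : ℂ)) 1 := by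
    have := Complex.hasDerivAt_Gamma_one
    simpa using this.congr_of_eventuallyEq heq.symm
  have h3 := h2.unique h1
  have h4 : (∫ t : ℝ in Ioi 0, (t:ℂ) ^ ((1:ℂ) - 1) * (Real.log t * Real.exp (-t))) =
      ((∫ t in Ioi (0:ℝ), Real.log t * Real.exp (-t) : ℝ) : ℂ) := by
    refine Eq.trans ?_ (_root_.integral_ofReal (𝕜 := ℂ))
    refine setIntegral_congr_fun measurableSet_Ioi (fun t ht => ?_)
    simp
  rw [h4] at h3
  exact_mod_cast h3.symm

lemma my_integral_log_exp {b : ℝ} (hb : 0 < b) :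
    ∫ t in Ioi (0:ℝ), Real.log t * Real.exp (-(b * t)) =
      -(Real.eulerMascheroniConstant + Real.log b) / b := by
  have key : ∫ t in Ioi (0:ℝ), Real.log t * Real.exp (-(b * t)) =
      ∫ t in Ioi (0:ℝ), (fun u => (Real.log u - Real.log b) * Real.exp (-u)) (b * t) := by
    refine setIntegral_congr_fun measurableSet_Ioi (fun t ht => ?_)
    have : Real.log (b * t) = Real.log b + Real.log t := Real.log_mul hb.ne' (ne_of_gt ht)
    simp only [this]
    ring
  rw [key, MeasureTheory.integral_comp_mul_left_Ioi (fun u => (Real.log u - Real.log b) * Real.exp (-u)) 0 hb, mul_zero]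
  have hsub : ∫ u in Ioi (0:ℝ), (Real.log u - Real.log b) * Real.exp (-u) =
      (∫ u in Ioi (0:ℝ), Real.log u * Real.exp (-u)) -
        Real.log b * ∫ u in Ioi (0:ℝ), Real.exp (-u) := by
    rw [← MeasureTheory.integral_const_mul, ← integral_sub]
    · exact setIntegral_congr_fun measurableSet_Ioi (fun u hu => by ring)
    · exact (by simpa [neg_mul, one_mul] using my_integrable_log_exp (b := 1) one_pos :
        IntegrableOn (fun u : ℝ => Real.log u * Real.exp (-u)) (Ioi 0))
    · refine IntegrableOn.congr_fun ((exp_neg_integrableOn_Ioi 0 one_pos).const_mul (Real.log b))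
        (fun u _ => by norm_num) measurableSet_Ioi
  rw [hsub, my_integral_log_exp_one, integral_exp_neg_Ioi_zero]
  have hb0 : b ≠ 0 := hb.ne'
  field_simp
  ring_nf
  rw [mul_right_comm b eulerMascheroniConstant, mul_right_comm b (Real.log b), mul_inv_cancel₀ hb0]
  ring

lemma my_beta_term (e : ℕ) :
    IntegrableOn (fun z : ℝ => Real.log (-Real.log (1 - z)) * (1 - z)^e) (Ioo 0 1) ∧
    ∫ z in Ioo (0:ℝ) 1, Real.log (-Real.log (1 - z)) * (1 - z)^e =
      -(Real.eulerMascheroniConstant + Real.log ((e:ℝ)+1)) / ((e:ℝ)+1) := by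
  have hb : (0:ℝ) < (e:ℝ)+1 := by positivity
  set f : ℝ → ℝ := fun t => 1 - Real.exp (-t) with hf
  have himg : f '' Ioi 0 = Ioo 0 1 := by
    ext z
    constructor
    · rintro ⟨t, ht, rfl⟩
      have h1 : Real.exp (-t) < 1 := Real.exp_lt_one_iff.mpr (by simpa using (mem_Ioi.mp ht))
      have h2 : 0 < Real.exp (-t) := Real.exp_pos _
      exact ⟨by simp only [hf]; linarith, by simp only [hf]; linarith⟩
    · rintro ⟨hz0, hz1⟩
      have h1z : 0 < 1 - z := by linarith
      refine ⟨-Real.log (1 - z), ?_, ?_⟩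
      · have : Real.log (1 - z) < 0 := Real.log_neg h1z (by linarith)
        simpa using this
      · simp [hf, Real.exp_log h1z]
  have hderiv : ∀ t ∈ Ioi (0:ℝ), HasDerivWithinAt f (Real.exp (-t)) (Ioi 0) t := by
    intro t _
    have h := ((Real.hasDerivAt_exp (-t)).comp t (hasDerivAt_neg t)).const_sub 1
    simpa [hf] using h.hasDerivWithinAt
  have hinj : InjOn f (Ioi 0) := by
    intro a _ c _ h
    simp only [hf, sub_right_inj, Real.exp_eq_exp, neg_inj] at h
    exact h
  have hfun : ∀ t : ℝ, |Real.exp (-t)| • (Real.log (-Real.log (1 - f t)) * (1 - f t)^e)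
      = Real.log t * Real.exp (-(((e:ℝ)+1) * t)) := by
    intro t
    rw [hf]
    simp only [sub_sub_cancel, Real.log_exp, neg_neg, smul_eq_mul,
      abs_of_pos (Real.exp_pos _), ← Real.exp_nat_mul]
    rw [show (-(((e:ℝ)+1) * t)) = -t + (e:ℝ) * -t by ring, Real.exp_add]
    ring
  constructor
  · rw [← himg, integrableOn_image_iff_integrableOn_abs_deriv_smul measurableSet_Ioi hderiv hinj]
    exact IntegrableOn.congr_fun (my_integrable_log_exp hb) (fun t _ => (hfun t).symm) measurableSet_Ioi
  · rw [← himg, integral_image_eq_integral_abs_deriv_smul measurableSet_Ioi hderiv hinj]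
    rw [setIntegral_congr_fun measurableSet_Ioi (fun t _ => hfun t)]
    exact my_integral_log_exp hb

/-- For `Z ~ Beta(r, n-r+1)` with `1 < r ≤ n`,
`E[log(-log(1-Z))]` equals the stated finite sum. -/
theorem beta_loglog_mean (n r : ℕ) (hr : 1 < r) (hrn : r ≤ n) :
    ∫ z in Set.Ioo (0 : ℝ) 1,
        Real.log (-Real.log (1 - z)) *
          (z ^ (r - 1) * (1 - z) ^ (n - r) /
            (Real.Gamma r * Real.Gamma ((n : ℝ) - r + 1) / Real.Gamma ((n : ℝ) + 1))) =
      (1 / (Real.Gamma r * Real.Gamma ((n : ℝ) - r + 1) / Real.Gamma ((n : ℝ) + 1))) *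
        ∑ j ∈ Finset.range r, ((r - 1).choose j : ℝ) * (-1 : ℝ) ^ j *
          (-1 / ((n : ℝ) - r + 1 + j)) *
          (Real.eulerMascheroniConstant + Real.log ((n : ℝ) - r + 1 + j)) := by
  have hrnR : (r:ℝ) ≤ n := by exact_mod_cast hrn
  set B := Real.Gamma r * Real.Gamma ((n:ℝ) - r + 1) / Real.Gamma ((n:ℝ) + 1) with hB
  have step1 : ∀ z : ℝ, Real.log (-Real.log (1-z)) * (z^(r-1) * (1-z)^(n-r) / B)
      = (1/B) * (Real.log (-Real.log (1-z)) * (z^(r-1) * (1-z)^(n-r))) := fun z => by ring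
  simp_rw [step1]
  rw [MeasureTheory.integral_const_mul]
  congr 1
  have expand : ∀ z : ℝ, Real.log (-Real.log (1-z)) * (z^(r-1) * (1-z)^(n-r)) =
      ∑ j ∈ Finset.range r, ((r-1).choose j : ℝ) * (-1:ℝ)^j *
        (Real.log (-Real.log (1-z)) * (1-z)^(n-r+j)) := by
    intro z
    have hz : z ^ (r-1) = ∑ j ∈ Finset.range r, ((r-1).choose j : ℝ) * (-1:ℝ)^j * (1-z)^j := by
      have h := add_pow (-(1-z)) (1:ℝ) (r-1)
      rw [show (-(1-z)) + 1 = z by ring] at h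
      rw [h, (by omega : r - 1 + 1 = r)]
      refine Finset.sum_congr rfl (fun j _ => ?_)
      rw [neg_pow]
      ring
    rw [hz, Finset.sum_mul, Finset.mul_sum]
    refine Finset.sum_congr rfl (fun j _ => ?_)
    rw [pow_add]
    ring
  simp_rw [expand]
  rw [MeasureTheory.integral_finset_sum _ (fun j _ => ((my_beta_term (n - r + j)).1.const_mul _))]
  refine Finset.sum_congr rfl (fun j hj => ?_)
  rw [MeasureTheory.integral_const_mul, (my_beta_term (n - r + j)).2]
  have hc : ((n - r + j : ℕ) : ℝ) + 1 = (n:ℝ) - r + 1 + j := by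
    push_cast [Nat.cast_sub hrn]
    ring
  rw [hc]
  have hkpos : (0:ℝ) < (n:ℝ) - r + 1 + j := by
    have : (0:ℝ) ≤ j := Nat.cast_nonneg j
    linarith
  field_simp
end

section
/- Let Z ~ Beta(r, n-r+1) with positive integers 1 < r ≤ n. Then E[(log(-log(1-Z)))²] = (1/B(r, n-r+1)) · Σ_{j=0}^{r-1} C(r-1, j) (-1)^j · (1/(n-r+1+j)) · (π²/6 + (C + log(n-r+1+j))²). -/
open Real MeasureTheory Filter Topology Set

local notation "γ" => Real.eulerMascheroniConstant

noncomputable def psi : ℝ → ℝ := deriv (fun x => Real.log (Real.Gamma x))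

lemma diffGamma {x : ℝ} (hx : 0 < x) : DifferentiableAt ℝ Real.Gamma x :=
  Real.differentiableAt_Gamma fun m => ((neg_nonpos.mpr (Nat.cast_nonneg m)).trans_lt hx).ne'

lemma psi_eq {x : ℝ} (hx : 0 < x) : psi x = deriv Real.Gamma x / Real.Gamma x :=
  deriv.log (diffGamma hx) (Real.Gamma_pos_of_pos hx).ne'

lemma diff_logGamma {x : ℝ} (hx : 0 < x) :
    DifferentiableAt ℝ (fun x => Real.log (Real.Gamma x)) x :=
  (diffGamma hx).log (Real.Gamma_pos_of_pos hx).ne'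

lemma psi_rec {x : ℝ} (hx : 0 < x) : psi (x + 1) = psi x + 1 / x := by
  unfold psi
  have h_rec : ∀ y : ℝ, 0 < y → Real.log (Real.Gamma (y + 1)) = Real.log (Real.Gamma y) + Real.log y := by
    intro y hy
    rw [Real.Gamma_add_one hy.ne', Real.log_mul hy.ne' (Real.Gamma_pos_of_pos hy).ne', add_comm]
  rw [← deriv_comp_add_const, one_div, ← Real.deriv_log,
    ← deriv_add (diff_logGamma hx) (Real.differentiableAt_log hx.ne')]
  apply Filter.EventuallyEq.deriv_eq
  filter_upwards [eventually_gt_nhds hx] using h_rec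

lemma psi_add_nat {x : ℝ} (hx : 0 < x) (n : ℕ) :
    psi (x + n) = psi x + ∑ k ∈ Finset.range n, 1 / (x + k) := by
  induction n with
  | zero => simp
  | succ n ih =>
    have : x + (n + 1 : ℕ) = (x + n) + 1 := by push_cast; ring
    rw [this, psi_rec (by positivity), ih, Finset.sum_range_succ]
    push_cast; ring

lemma psi_nat (n : ℕ) : psi ((n : ℝ) + 1) = -γ + harmonic n := by
  have h : ((n.factorial : ℝ)) ≠ 0 := Nat.cast_ne_zero.mpr (Nat.factorial_ne_zero n)
  rw [psi_eq (by positivity), Real.deriv_Gamma_nat n, Real.Gamma_nat_eq_factorial]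
  field_simp

lemma psi_mono : MonotoneOn psi (Ioi (0 : ℝ)) :=
  Real.convexOn_log_Gamma.monotoneOn_deriv fun _ hx => diff_logGamma hx

lemma psi_series {x : ℝ} (hx : 0 < x) (hx2 : x ≤ 2) :
    HasSum (fun k : ℕ => 1/(k+1:ℝ) - 1/(x+k)) (psi x + γ) := by
  have key : ∀ n : ℕ, ∑ k ∈ Finset.range n, (1/(k+1:ℝ) - 1/(x+k))
      = (psi x + γ) + (psi ((n:ℝ)+1) - psi (x+n)) := by
    intro n
    have h1 := psi_add_nat hx n
    have h2 := psi_nat n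
    have h3 : ((harmonic n : ℚ) : ℝ) = ∑ k ∈ Finset.range n, (1/(k+1:ℝ)) := by
      rw [harmonic]; push_cast; simp [one_div]
    rw [Finset.sum_sub_distrib]
    rw [← h3]
    linarith
  have hbound : ∀ n : ℕ, 1 ≤ n → |psi ((n:ℝ)+1) - psi (x+n)| ≤ 1/n := by
    intro n hn
    have hn0 : (0:ℝ) < n := by exact_mod_cast hn
    have hrec1 : psi ((n:ℝ)+1) = psi n + 1/n := psi_rec hn0
    have hrec2 : psi ((n:ℝ)+2) = psi ((n:ℝ)+1) + 1/((n:ℝ)+1) := by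
      have := psi_rec (x := (n:ℝ)+1) (by positivity)
      convert this using 2 <;> ring
    have hm1 : psi (n:ℝ) ≤ psi (x+n) :=
      psi_mono (mem_Ioi.mpr hn0) (mem_Ioi.mpr (by positivity)) (by linarith)
    have hm2 : psi (x+n) ≤ psi ((n:ℝ)+2) :=
      psi_mono (mem_Ioi.mpr (by positivity)) (mem_Ioi.mpr (by positivity)) (by linarith)
    rw [abs_le]
    constructor
    · have h1n : 1/((n:ℝ)+1) ≤ 1/n := by
        apply one_div_le_one_div_of_le hn0; linarith
      linarith
    · linarith
  have htend : Tendsto (fun n : ℕ => ∑ k ∈ Finset.range n, (1/(k+1:ℝ) - 1/(x+k)))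
      atTop (𝓝 (psi x + γ)) := by
    simp_rw [key]
    have hzero : Tendsto (fun n : ℕ => psi ((n:ℝ)+1) - psi (x+n)) atTop (𝓝 0) := by
      apply squeeze_zero_norm' _ tendsto_one_div_atTop_nhds_zero_nat
      filter_upwards [eventually_ge_atTop 1] with n hn using hbound n hn
    simpa using Tendsto.add (tendsto_const_nhds (x := psi x + γ)) hzero
  have hsummable : Summable (fun k : ℕ => 1/(k+1:ℝ) - 1/(x+k)) := by
    apply Summable.of_norm_bounded_eventually_nat (g := fun k => 2/(k+1:ℝ)^2)
    · have h0 : Summable (fun n : ℕ => 2/(n:ℝ)^2) :=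
        (Real.summable_one_div_nat_pow.mpr one_lt_two).mul_left 2 |>.congr (fun n => by
          rw [mul_one_div])
      have := (summable_nat_add_iff 1).mpr h0
      exact this.congr (fun k => by push_cast; ring)
    · filter_upwards [eventually_ge_atTop 1] with k hk
      have hk0 : (1:ℝ) ≤ k := by exact_mod_cast hk
      have hxk : (0:ℝ) < x + k := by positivity
      have heq : 1/(k+1:ℝ) - 1/(x+k) = (x-1)/((k+1)*(x+k)) := by
        field_simp; ring
      rw [heq, norm_div]
      have h1 : ‖x - 1‖ ≤ 1 := by rw [Real.norm_eq_abs, abs_le]; constructor <;> linarith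
      have h2 : ((k:ℝ)+1)^2/2 ≤ (k+1)*(x+k) := by nlinarith
      have h3 : ‖(k+1:ℝ)*(x+k)‖ = (k+1)*(x+k) := by
        rw [Real.norm_eq_abs, abs_of_pos]; positivity
      rw [h3, div_le_div_iff₀ (by positivity) (by positivity)]
      nlinarith [mul_le_mul_of_nonneg_right h1 (le_of_lt (by positivity : (0:ℝ) < (k+1)*(x+k)))]
  have := hsummable.hasSum
  rwa [tendsto_nhds_unique hsummable.hasSum.tendsto_sum_nat htend] at this

lemma hasDerivAt_psi_one : HasDerivAt psi (π^2/6) 1 := by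
  set t : Set ℝ := Ioo (1/2 : ℝ) (3/2)
  have ht : IsOpen t := isOpen_Ioo
  have h't : IsPreconnected t := (convex_Ioo _ _).isPreconnected
  have hu : Summable (fun k : ℕ => 4/(k+1:ℝ)^2) :=
    ((summable_nat_add_iff 1).mpr ((Real.summable_one_div_nat_pow.mpr one_lt_two).mul_left 4
      |>.congr (fun n => mul_one_div 4 _))).congr (fun k => by push_cast; ring)
  have hg : ∀ (k : ℕ) (y : ℝ), y ∈ t → HasDerivAt (fun z => 1/(k+1:ℝ) - 1/(z+k)) (1/(y+k)^2) y := by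
    intro k y hy
    have hyk : y + k ≠ 0 := by have := hy.1; positivity
    have h1 : HasDerivAt (fun z : ℝ => z + k) 1 y := (hasDerivAt_id y).add_const _
    have h2 : HasDerivAt (fun z : ℝ => (z+k)⁻¹) (-1/(y+k)^2) y := by
      exact ((hasDerivAt_inv hyk).comp y h1).congr_deriv (by ring)
    have h3 := (hasDerivAt_const y (1/(k+1:ℝ))).sub h2
    rw [show (fun z : ℝ => 1/(k+1:ℝ) - 1/(z+k)) = (fun _ : ℝ => 1/(k+1:ℝ)) - fun z : ℝ => (z+(k:ℝ))⁻¹ by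
      funext z; simp only [one_div, Pi.sub_apply]]
    exact h3.congr_deriv (by ring)
  have hg' : ∀ (k : ℕ) (y : ℝ), y ∈ t → ‖1/(y+k)^2‖ ≤ 4/(k+1:ℝ)^2 := by
    intro k y hy
    have h1 : ((k:ℝ)+1)/2 ≤ y + k := by have := hy.1; push_cast; linarith
    have h2 : (0:ℝ) < y + k := lt_of_lt_of_le (by positivity) h1
    rw [Real.norm_eq_abs, abs_of_pos (by positivity)]
    rw [div_le_div_iff₀ (by positivity) (by positivity)]
    nlinarith
  have hg0 : Summable fun k : ℕ => 1/(k+1:ℝ) - 1/((1:ℝ)+k) := by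
    apply summable_zero.congr
    intro k; simp [add_comm]
  have hmem : (1:ℝ) ∈ t := by constructor <;> norm_num
  have hds := hasDerivAt_tsum_of_isPreconnected hu ht h't hg hg' hmem hg0 hmem
  have hsum2 : HasSum (fun k : ℕ => 1/((1:ℝ)+k)^2) (π^2/6) := by
    have h0 := hasSum_zeta_two
    have := (hasSum_nat_add_iff' 1).mpr h0
    simpa [add_comm] using this
  rw [hsum2.tsum_eq] at hds
  have heq : (fun z => ∑' k : ℕ, (1/(k+1:ℝ) - 1/(z+k))) =ᶠ[nhds 1] (fun z => psi z + γ) := by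
    filter_upwards [Ioo_mem_nhds (by norm_num : (1/2:ℝ) < 1) (by norm_num : (1:ℝ) < 3/2)] with z hz
    exact (psi_series (by linarith [hz.1]) (by linarith [hz.2])).tsum_eq
  have := hds.congr_of_eventuallyEq heq.symm
  simpa using this.sub_const γ

lemma hasDerivAt_deriv_Gamma_one :
    HasDerivAt (deriv Real.Gamma) (γ^2 + π^2/6) 1 := by
  have hG : HasDerivAt Real.Gamma (-γ) 1 := Real.hasDerivAt_Gamma_one
  have hpsi1 : psi 1 = -γ := by
    rw [psi_eq one_pos, Real.Gamma_one, div_one, hG.deriv]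
  have hmul := hG.mul hasDerivAt_psi_one
  have heq : (fun x => Real.Gamma x * psi x) =ᶠ[nhds 1] deriv Real.Gamma := by
    filter_upwards [eventually_gt_nhds one_pos] with x hx
    rw [psi_eq hx, mul_div_cancel₀ _ (Real.Gamma_pos_of_pos hx).ne']
  have := hmul.congr_of_eventuallyEq heq.symm
  rw [hpsi1, Real.Gamma_one] at this
  exact this.congr_deriv (by ring)

open Asymptotics in
lemma F0top (a : ℝ) : (fun t : ℝ => (Real.exp (-t) : ℂ)) =O[atTop] (· ^ (-a)) := by
  apply IsBigO.of_bound 1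
  have h := (isLittleO_rpow_exp_atTop a).bound one_pos
  filter_upwards [h, eventually_gt_atTop 0] with t ht ht0
  rw [Complex.norm_real, Real.norm_eq_abs, Real.norm_eq_abs, abs_of_pos (Real.exp_pos _),
    abs_of_pos (Real.rpow_pos_of_pos ht0 _), one_mul, Real.exp_neg, Real.rpow_neg ht0.le]
  apply inv_anti₀ (Real.rpow_pos_of_pos ht0 _)
  simpa [Real.norm_eq_abs, abs_of_pos (Real.rpow_pos_of_pos ht0 a),
    abs_of_pos (Real.exp_pos t)] using ht

open Asymptotics in
lemma F0bot : (fun t : ℝ => (Real.exp (-t) : ℂ)) =O[nhdsWithin 0 (Ioi 0)] (· ^ (-(0:ℝ))) := by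
  apply IsBigO.of_bound 1
  filter_upwards [self_mem_nhdsWithin] with t (ht : 0 < t)
  rw [Complex.norm_real, neg_zero, Real.rpow_zero]
  simp [abs_of_pos (Real.exp_pos _), Real.exp_le_one_iff]
  positivity

noncomputable def F0 : ℝ → ℂ := fun t => (Real.exp (-t) : ℂ)
noncomputable def F1 : ℝ → ℂ := fun t => Real.log t • F0 t
noncomputable def F2 : ℝ → ℂ := fun t => Real.log t • F1 t

lemma hfc0 : LocallyIntegrableOn F0 (Ioi (0:ℝ)) :=
  (Complex.continuous_ofReal.comp (Real.continuous_exp.comp continuous_neg)).locallyIntegrable.locallyIntegrableOn _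

lemma hfc1 : LocallyIntegrableOn F1 (Ioi (0:ℝ)) := by
  apply ContinuousOn.locallyIntegrableOn _ measurableSet_Ioi
  apply ContinuousOn.smul (Real.continuousOn_log.mono (by intro x hx; exact (ne_of_gt hx)))
  exact ((Complex.continuous_ofReal.comp (Real.continuous_exp.comp continuous_neg))).continuousOn

open Asymptotics in
lemma F1top (a : ℝ) : F1 =O[atTop] (· ^ (-a)) :=
  isBigO_rpow_top_log_smul (lt_add_one a) (F0top (a+1))

open Asymptotics in
lemma F1bot : F1 =O[nhdsWithin 0 (Ioi 0)] (· ^ (-(1/2:ℝ))) :=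
  isBigO_rpow_zero_log_smul (by norm_num) F0bot

lemma mellin_F0_deriv {s : ℂ} (hs : 0 < s.re) :
    MellinConvergent F1 s ∧ HasDerivAt (mellin F0) (mellin F1 s) s :=
  mellin_hasDerivAt_of_isBigO_rpow (a := s.re + 1) (b := 0) hfc0 (F0top _)
    (by linarith) F0bot hs

lemma mellin_F1_deriv {s : ℂ} (hs : (1/2:ℝ) < s.re) :
    MellinConvergent F2 s ∧ HasDerivAt (mellin F1) (mellin F2 s) s :=
  mellin_hasDerivAt_of_isBigO_rpow (a := s.re + 1) (b := 1/2) hfc1 (F1top _)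
    (by linarith) F1bot hs

lemma mellin_F0_eq_Gamma {s : ℂ} (hs : 0 < s.re) : mellin F0 s = Complex.Gamma s := by
  rw [Complex.Gamma_eq_integral hs, Complex.GammaIntegral_eq_mellin]; rfl

lemma deriv_realGamma_eq {x : ℝ} (hx : 0 < x) : deriv Real.Gamma x = (mellin F1 (x:ℂ)).re := by
  have h := (mellin_F0_deriv (s := (x:ℂ)) (by simpa using hx)).2
  have h2 := h.real_of_complex
  have heq : (fun y : ℝ => (mellin F0 (y:ℂ)).re) =ᶠ[nhds x] Real.Gamma := by
    filter_upwards [eventually_gt_nhds hx] with y hy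
    rw [mellin_F0_eq_Gamma (by simpa using hy), Complex.Gamma_ofReal, Complex.ofReal_re]
  exact (h2.congr_of_eventuallyEq heq.symm).deriv

lemma mellin_F2_one_re : (mellin F2 1).re = γ^2 + π^2/6 := by
  have h := (mellin_F1_deriv (s := 1) (by norm_num)).2
  have h1 : HasDerivAt (mellin F1) (mellin F2 1) ((1:ℝ):ℂ) := by
    simpa using h
  have h2 := h1.real_of_complex
  have heq : (fun x : ℝ => (mellin F1 (x:ℂ)).re) =ᶠ[nhds 1] deriv Real.Gamma := by
    filter_upwards [eventually_gt_nhds one_pos] with y hy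
    exact (deriv_realGamma_eq hy).symm
  exact (h2.congr_of_eventuallyEq heq.symm).unique hasDerivAt_deriv_Gamma_one

lemma mellin_F1_one_re : (mellin F1 1).re = -γ := by
  have h : (1:ℂ) = ((1:ℝ):ℂ) := by norm_num
  rw [h, ← deriv_realGamma_eq one_pos]
  have := Real.eulerMascheroniConstant_eq_neg_deriv
  linarith

lemma F1_eq (t : ℝ) : F1 t = ((Real.log t * Real.exp (-t) : ℝ) : ℂ) := by
  simp [F1, F0, Complex.real_smul, Complex.ofReal_mul]

lemma F2_eq (t : ℝ) : F2 t = ((Real.log t * (Real.log t * Real.exp (-t)) : ℝ) : ℂ) := by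
  simp [F2, F1, F0, Complex.real_smul, Complex.ofReal_mul]

lemma integral_log_exp_neg : ∫ t in Ioi (0:ℝ), Real.log t * Real.exp (-t) = -γ := by
  have h : mellin F1 1 = ((∫ t in Ioi (0:ℝ), Real.log t * Real.exp (-t) : ℝ) : ℂ) := by
    rw [mellin]
    simp only [sub_self, Complex.cpow_zero, one_smul]
    have h1 : ∫ t in Ioi (0:ℝ), F1 t
        = ∫ t in Ioi (0:ℝ), ((Real.log t * Real.exp (-t) : ℝ) : ℂ) :=
      setIntegral_congr_fun measurableSet_Ioi fun t _ => F1_eq t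
    rw [h1]
    exact integral_ofReal
  have := mellin_F1_one_re
  rw [h, Complex.ofReal_re] at this
  exact this

lemma integral_log_sq_exp_neg :
    ∫ t in Ioi (0:ℝ), (Real.log t)^2 * Real.exp (-t) = γ^2 + π^2/6 := by
  have h : mellin F2 1 = ((∫ t in Ioi (0:ℝ), (Real.log t)^2 * Real.exp (-t) : ℝ) : ℂ) := by
    rw [mellin]
    simp only [sub_self, Complex.cpow_zero, one_smul]
    have h1 : ∫ t in Ioi (0:ℝ), F2 t
        = ∫ t in Ioi (0:ℝ), (((Real.log t)^2 * Real.exp (-t) : ℝ) : ℂ) := by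
      refine setIntegral_congr_fun measurableSet_Ioi fun t _ => ?_
      rw [F2_eq]; norm_cast; ring
    rw [h1]
    exact integral_ofReal
  have := mellin_F2_one_re
  rw [h, Complex.ofReal_re] at this
  exact this

lemma integrable_log_exp_neg :
    IntegrableOn (fun t => Real.log t * Real.exp (-t)) (Ioi (0:ℝ)) := by
  have h := (mellin_F0_deriv (s := 1) (by norm_num)).1
  unfold MellinConvergent at h
  have h2 : IntegrableOn F1 (Ioi (0:ℝ)) := by
    apply h.congr_fun _ measurableSet_Ioi
    intro t _; simp
  have h3 : IntegrableOn (fun x => (F1 x).re) (Ioi (0:ℝ)) := h2.re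
  apply h3.congr_fun _ measurableSet_Ioi
  intro t _; simp only []; rw [F1_eq, Complex.ofReal_re]

lemma integrable_log_sq_exp_neg :
    IntegrableOn (fun t => (Real.log t)^2 * Real.exp (-t)) (Ioi (0:ℝ)) := by
  have h := (mellin_F1_deriv (s := 1) (by norm_num)).1
  unfold MellinConvergent at h
  have h2 : IntegrableOn F2 (Ioi (0:ℝ)) := by
    apply h.congr_fun _ measurableSet_Ioi
    intro t _; simp
  have h3 : IntegrableOn (fun x => (F2 x).re) (Ioi (0:ℝ)) := h2.re
  apply h3.congr_fun _ measurableSet_Ioi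
  intro t _; simp only []; rw [F2_eq, Complex.ofReal_re]; ring

lemma integral_log_sq_exp_neg_mul {a : ℝ} (ha : 0 < a) :
    ∫ t in Ioi (0:ℝ), (Real.log t)^2 * Real.exp (-(a*t)) =
      (1/a) * (π^2/6 + (γ + Real.log a)^2) := by
  have hint1 := integrable_log_sq_exp_neg
  have hint2 := integrable_log_exp_neg
  have hint3 : IntegrableOn (fun u => Real.exp (-u)) (Ioi (0:ℝ)) := by
    simpa using exp_neg_integrableOn_Ioi 0 (by norm_num : (0:ℝ) < 1)
  have key : ∫ u in Ioi (0:ℝ), (Real.log (u/a))^2 * Real.exp (-u)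
      = π^2/6 + (γ + Real.log a)^2 := by
    have heq : ∀ u ∈ Ioi (0:ℝ), (Real.log (u/a))^2 * Real.exp (-u)
        = ((Real.log u)^2*Real.exp (-u) - (2*Real.log a) * (Real.log u * Real.exp (-u)))
          + (Real.log a)^2 * Real.exp (-u) := by
      intro u hu
      rw [Real.log_div (ne_of_gt hu) ha.ne']
      ring
    have hi2 : IntegrableOn (fun x => 2*Real.log a * (Real.log x * Real.exp (-x))) (Ioi (0:ℝ)) :=
      hint2.const_mul _
    have hi12 : IntegrableOn (fun x => Real.log x^2 * Real.exp (-x)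
        - 2*Real.log a * (Real.log x * Real.exp (-x))) (Ioi (0:ℝ)) := hint1.sub hi2
    have hi3 : IntegrableOn (fun x => Real.log a^2 * Real.exp (-x)) (Ioi (0:ℝ)) :=
      hint3.const_mul _
    rw [setIntegral_congr_fun measurableSet_Ioi heq, integral_add hi12 hi3,
      integral_sub hint1 hi2, MeasureTheory.integral_const_mul, MeasureTheory.integral_const_mul,
      integral_log_sq_exp_neg, integral_log_exp_neg, integral_exp_neg_Ioi_zero]
    ring
  have h := integral_comp_mul_left_Ioi (fun u => (Real.log (u/a))^2 * Real.exp (-u)) 0 ha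
  simp only [mul_zero] at h
  rw [key] at h
  calc ∫ t in Ioi (0:ℝ), (Real.log t)^2 * Real.exp (-(a*t))
      = ∫ x in Ioi (0:ℝ), (Real.log (a*x/a))^2 * Real.exp (-(a*x)) :=
        (setIntegral_congr_fun measurableSet_Ioi (fun x _ => by
          rw [mul_div_cancel_left₀ x ha.ne'])).symm
    _ = a⁻¹ • (π^2/6 + (γ + Real.log a)^2) := h
    _ = (1/a) * (π^2/6 + (γ + Real.log a)^2) := by rw [smul_eq_mul, one_div]

lemma integrable_log_sq_exp_neg_mul {a : ℝ} (ha : 1 ≤ a) :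
    IntegrableOn (fun t => (Real.log t)^2 * Real.exp (-(a*t))) (Ioi (0:ℝ)) := by
  apply integrable_log_sq_exp_neg.mono'
  · apply ContinuousOn.aestronglyMeasurable _ measurableSet_Ioi
    apply ContinuousOn.mul
    · exact (Real.continuousOn_log.mono (fun x hx => ne_of_gt hx)).pow 2
    · exact (Real.continuous_exp.comp (continuous_neg.comp
        (continuous_const.mul continuous_id))).continuousOn
  · filter_upwards [ae_restrict_mem measurableSet_Ioi] with t ht
    have ht' : (0:ℝ) < t := ht
    rw [Real.norm_eq_abs, abs_of_nonneg (by positivity)]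
    have hle : Real.exp (-(a*t)) ≤ Real.exp (-t) := by
      apply Real.exp_le_exp.mpr; nlinarith
    nlinarith [sq_nonneg (Real.log t), Real.exp_pos (-(a*t))]

/-- For `Z ~ Beta(r, n-r+1)` with `1 < r ≤ n`,
`E[(log(-log(1-Z)))²]` equals the stated finite sum. -/
theorem beta_loglog_sq_mean (n r : ℕ) (hr : 1 < r) (hrn : r ≤ n) :
    ∫ z in Set.Ioo (0 : ℝ) 1,
        (Real.log (-Real.log (1 - z))) ^ 2 *
          (z ^ (r - 1) * (1 - z) ^ (n - r) /
            (Real.Gamma r * Real.Gamma ((n : ℝ) - r + 1) / Real.Gamma ((n : ℝ) + 1))) =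
      (1 / (Real.Gamma r * Real.Gamma ((n : ℝ) - r + 1) / Real.Gamma ((n : ℝ) + 1))) *
        ∑ j ∈ Finset.range r, ((r - 1).choose j : ℝ) * (-1 : ℝ) ^ j *
          (1 / ((n : ℝ) - r + 1 + j)) *
          (Real.pi ^ 2 / 6 +
            (Real.eulerMascheroniConstant + Real.log ((n : ℝ) - r + 1 + j)) ^ 2) := by
  set B := Real.Gamma r * Real.Gamma ((n:ℝ) - r + 1) / Real.Gamma ((n:ℝ)+1) with hB
  set G : ℝ → ℝ := fun z => (Real.log (-Real.log (1-z)))^2 * (z^(r-1) * (1-z)^(n-r)) with hG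
  set aj : ℕ → ℝ := fun j => (n:ℝ) - r + 1 + j with haj
  have haj1 : ∀ j : ℕ, 1 ≤ aj j := by
    intro j
    have h1 : (r:ℝ) ≤ n := Nat.cast_le.mpr hrn
    have h2 : (0:ℝ) ≤ j := Nat.cast_nonneg j
    simp only [haj]; linarith
  -- substitution z = 1 - exp (-t)
  have himg : (fun t : ℝ => 1 - Real.exp (-t)) '' Ioi 0 = Ioo (0:ℝ) 1 := by
    ext z
    constructor
    · rintro ⟨t, ht, rfl⟩
      have h1 : 0 < Real.exp (-t) := Real.exp_pos _
      have h2 : Real.exp (-t) < 1 := by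
        rw [Real.exp_lt_one_iff]; simpa using (mem_Ioi.mp ht)
      exact ⟨by simp only []; linarith, by simp only []; linarith⟩
    · intro hz
      obtain ⟨hz0, hz1⟩ := hz
      have h1z : 0 < 1 - z := by linarith
      refine ⟨-Real.log (1-z), ?_, ?_⟩
      · have : Real.log (1-z) < 0 := Real.log_neg h1z (by linarith)
        simpa using this
      · simp only [neg_neg]
        rw [Real.exp_log h1z]; ring
  have hderiv : ∀ t ∈ Ioi (0:ℝ),
      HasDerivWithinAt (fun t => 1 - Real.exp (-t)) (Real.exp (-t)) (Ioi 0) t := by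
    intro t _
    have h1 : HasDerivAt (fun t : ℝ => 1 - Real.exp (-t)) (Real.exp (-t)) t := by
      simpa using (Real.hasDerivAt_exp (-t)).comp t (hasDerivAt_neg t) |>.const_sub 1
    exact h1.hasDerivWithinAt
  have hinj : InjOn (fun t : ℝ => 1 - Real.exp (-t)) (Ioi 0) := by
    intro a _ b _ h
    have h2 : Real.exp (-a) = Real.exp (-b) := by
      have : 1 - Real.exp (-a) = 1 - Real.exp (-b) := h
      linarith
    have := Real.exp_injective h2
    linarith [neg_injective this]
  have hsub := integral_image_eq_integral_abs_deriv_smul measurableSet_Ioi hderiv hinj G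
  rw [himg] at hsub
  -- pointwise identity on Ioi 0
  have hpow : ∀ x : ℝ, (1-x)^(r-1)
      = ∑ j ∈ Finset.range r, ((r-1).choose j : ℝ) * (-1)^j * x^j := by
    intro x
    rw [sub_eq_add_neg, add_comm, add_pow]
    rw [(by omega : r - 1 + 1 = r)]
    apply Finset.sum_congr rfl
    intro j _
    rw [neg_pow]; ring
  have hpt : ∀ t ∈ Ioi (0:ℝ), |Real.exp (-t)| • G (1 - Real.exp (-t))
      = ∑ j ∈ Finset.range r,
          ((r-1).choose j : ℝ) * (-1)^j * ((Real.log t)^2 * Real.exp (-(aj j * t))) := by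
    intro t ht
    have h1 : (1:ℝ) - (1 - Real.exp (-t)) = Real.exp (-t) := by ring
    simp only [hG, h1, smul_eq_mul, abs_of_pos (Real.exp_pos (-t)), Real.log_exp, neg_neg]
    rw [hpow (Real.exp (-t)), Finset.sum_mul, Finset.mul_sum, Finset.mul_sum]
    apply Finset.sum_congr rfl
    intro j _
    have hexp : Real.exp (-t) * (Real.exp (-t))^(n-r) * (Real.exp (-t))^j
        = Real.exp (-(aj j * t)) := by
      rw [← Real.exp_nat_mul, ← Real.exp_nat_mul, ← Real.exp_add, ← Real.exp_add]
      congr 1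
      push_cast [Nat.cast_sub hrn]
      simp only [haj]; ring
    calc Real.exp (-t) * (Real.log t ^ 2 * (((r-1).choose j : ℝ) * (-1)^j * (Real.exp (-t))^j
            * (Real.exp (-t))^(n-r)))
        = ((r-1).choose j : ℝ) * (-1)^j * (Real.log t ^ 2
            * (Real.exp (-t) * (Real.exp (-t))^(n-r) * (Real.exp (-t))^j)) := by ring
      _ = _ := by rw [hexp]
  rw [setIntegral_congr_fun measurableSet_Ioi hpt] at hsub
  -- exchange sum and integral
  have hint : ∀ j ∈ Finset.range r, IntegrableOn
      (fun t => ((r-1).choose j : ℝ) * (-1)^j * ((Real.log t)^2 * Real.exp (-(aj j * t))))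
      (Ioi (0:ℝ)) := by
    intro j _
    exact (integrable_log_sq_exp_neg_mul (haj1 j)).const_mul _
  rw [MeasureTheory.integral_finset_sum _ hint] at hsub
  have hval : ∀ j ∈ Finset.range r,
      ∫ t in Ioi (0:ℝ), ((r-1).choose j : ℝ) * (-1)^j * ((Real.log t)^2 * Real.exp (-(aj j * t)))
        = ((r-1).choose j : ℝ) * (-1)^j * (1/(aj j)) * (π^2/6 + (γ + Real.log (aj j))^2) := by
    intro j _
    rw [MeasureTheory.integral_const_mul,
      integral_log_sq_exp_neg_mul (lt_of_lt_of_le one_pos (haj1 j))]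
    ring
  rw [Finset.sum_congr rfl hval] at hsub
  -- conclude
  have hLHS : ∫ z in Set.Ioo (0:ℝ) 1, (Real.log (-Real.log (1-z)))^2
      * (z^(r-1) * (1-z)^(n-r) / B) = (∫ z in Set.Ioo (0:ℝ) 1, G z) / B := by
    rw [← integral_div]
    apply setIntegral_congr_fun measurableSet_Ioo
    intro z _
    simp only [hG]; ring
  rw [hLHS, hsub, one_div, inv_mul_eq_div]
end

section
/- Let Z ~ Beta(1, n) for a positive integer n. Then E[(log(-log(1-Z)))²] = π²/6 + (C + log n)², and consequently Var(log(-log(1-Z))) = π²/6. -/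
open Real MeasureTheory Set Filter Complex
open scoped Topology

noncomputable section
namespace BetaAux

local notation "G" => Complex.Gamma
local notation "D1" => deriv Complex.Gamma
local notation "D2" => deriv (deriv Complex.Gamma)

lemma isOpen_V : IsOpen {s : ℂ | 0 < s.re} := isOpen_lt continuous_const Complex.continuous_re

lemma gamma_diffAt {s : ℂ} (hs : 0 < s.re) : DifferentiableAt ℂ G s := by
  refine Complex.differentiableAt_Gamma s fun m => ?_
  intro h
  rw [h] at hs
  simp only [Complex.neg_re, Complex.natCast_re] at hs
  have : (0:ℝ) ≤ m := m.cast_nonneg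
  linarith

lemma analyticOnNhd_Gamma : AnalyticOnNhd ℂ G {s : ℂ | 0 < s.re} := by
  refine DifferentiableOn.analyticOnNhd (fun s hs => ?_) isOpen_V
  exact (gamma_diffAt hs).differentiableWithinAt

lemma analyticOnNhd_D1 : AnalyticOnNhd ℂ D1 {s : ℂ | 0 < s.re} :=
  analyticOnNhd_Gamma.deriv

lemma hG {s : ℂ} (hs : 0 < s.re) : HasDerivAt G (D1 s) s :=
  (gamma_diffAt hs).hasDerivAt

lemma hD1 {s : ℂ} (hs : 0 < s.re) : HasDerivAt D1 (D2 s) s :=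
  ((analyticOnNhd_D1 s hs).differentiableAt).hasDerivAt

lemma re_half : ((1 : ℂ)/2).re = 1/2 := by norm_num [Complex.div_re]


lemma mem_nhds_half : {s : ℂ | 0 < s.re ∧ s.re < 1} ∈ 𝓝 (1/2 : ℂ) := by
  have : IsOpen {s : ℂ | 0 < s.re ∧ s.re < 1} :=
    (isOpen_lt continuous_const Complex.continuous_re).inter
      (isOpen_lt Complex.continuous_re continuous_const)
  exact this.mem_nhds (by norm_num [re_half])

lemma sin_ne_zero {s : ℂ} (hs : 0 < s.re ∧ s.re < 1) : Complex.sin (↑π * s) ≠ 0 := by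
  intro h
  obtain ⟨k, hk⟩ := Complex.sin_eq_zero_iff.mp h
  have hπ : (↑π : ℂ) ≠ 0 := Complex.ofReal_ne_zero.mpr Real.pi_ne_zero
  have hsk : s = (k : ℂ) := by
    have hk' : ↑π * s = ↑π * (k : ℂ) := by rw [hk]; ring
    exact mul_left_cancel₀ hπ hk'
  rw [hsk] at hs
  simp only [Complex.intCast_re] at hs
  have h0 : (0:ℤ) < k := by exact_mod_cast hs.1
  have h1 : (k:ℤ) < 1 := by exact_mod_cast hs.2
  omega

lemma hasDerivAt_sinpi (s : ℂ) :
    HasDerivAt (fun z : ℂ => Complex.sin (↑π * z)) (Complex.cos (↑π * s) * ↑π) s := by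
  simpa [Function.comp_def] using (Complex.hasDerivAt_sin (↑π * s)).comp s ((hasDerivAt_id s).const_mul (↑π : ℂ))

lemma sin_half : Complex.sin (↑π * (1/2 : ℂ)) = 1 := by
  have : (↑π * (1/2 : ℂ)) = ((π/2 : ℝ) : ℂ) := by push_cast; ring
  rw [this, ← Complex.ofReal_sin, Real.sin_pi_div_two, Complex.ofReal_one]

lemma cos_half : Complex.cos (↑π * (1/2 : ℂ)) = 0 := by
  have : (↑π * (1/2 : ℂ)) = ((π/2 : ℝ) : ℂ) := by push_cast; ring
  rw [this, ← Complex.ofReal_cos, Real.cos_pi_div_two, Complex.ofReal_zero]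

lemma hG_half : HasDerivAt G (D1 (1/2)) (1/2 : ℂ) := hG (by rw [re_half]; norm_num)

lemma hD1_half : HasDerivAt D1 (D2 (1/2)) (1/2 : ℂ) := hD1 (by rw [re_half]; norm_num)

lemma hG_one : HasDerivAt G (D1 1) (1 : ℂ) := hG (by norm_num)

lemma hD1_one : HasDerivAt D1 (D2 1) (1 : ℂ) := hD1 (by norm_num)

lemma Gamma_half : G (1/2 : ℂ) = ↑(Real.sqrt π) := by
  rw [Complex.Gamma_one_half_eq, Real.sqrt_eq_rpow, Complex.ofReal_cpow Real.pi_pos.le]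
  norm_num

/-- Equation (ii): from the reflection formula. -/
lemma eq_ii : 2 * (↑(Real.sqrt π) : ℂ) * D2 (1/2) - 2 * D1 (1/2) ^ 2 = (↑π : ℂ)^3 := by
  have hFG : (fun s : ℂ => G s * G (1 - s)) = fun s : ℂ => ↑π / Complex.sin (↑π * s) :=
    funext Complex.Gamma_mul_Gamma_one_sub
  -- derivative of LHS near 1/2
  have hev : deriv (fun s : ℂ => G s * G (1 - s)) =ᶠ[𝓝 (1/2 : ℂ)]
      fun s => D1 s * G (1 - s) - G s * D1 (1 - s) := by
    filter_upwards [mem_nhds_half] with s hs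
    have h2 : (0:ℝ) < (1 - s).re := by simp [Complex.sub_re]; linarith [hs.2]
    have hsub : HasDerivAt (fun z : ℂ => 1 - z) (-1) s := by
      simpa using (hasDerivAt_const s (1:ℂ)).fun_sub (hasDerivAt_id s)
    have hGm : HasDerivAt (fun z : ℂ => G (1 - z)) (-D1 (1 - s)) s := by
      simpa [Function.comp_def] using (hG h2).comp s hsub
    have := ((hG hs.1).fun_mul hGm).deriv
    rw [this]; ring
  have hGm2 : HasDerivAt (fun z : ℂ => G (1 - z)) (-D1 (1/2)) (1/2 : ℂ) := by
    have hsub : HasDerivAt (fun z : ℂ => 1 - z) (-1) (1/2 : ℂ) := by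
      simpa using (hasDerivAt_const (1/2:ℂ) (1:ℂ)).fun_sub (hasDerivAt_id (1/2:ℂ))
    have e : (1:ℂ) - 1/2 = 1/2 := by norm_num
    have hg : HasDerivAt G (D1 (1/2 : ℂ)) ((1:ℂ) - 1/2) := by rw [e]; exact hG_half
    simpa [Function.comp_def] using hg.comp (1/2:ℂ) hsub
  have hD1m2 : HasDerivAt (fun z : ℂ => D1 (1 - z)) (-D2 (1/2)) (1/2 : ℂ) := by
    have hsub : HasDerivAt (fun z : ℂ => 1 - z) (-1) (1/2 : ℂ) := by
      simpa using (hasDerivAt_const (1/2:ℂ) (1:ℂ)).fun_sub (hasDerivAt_id (1/2:ℂ))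
    have e : (1:ℂ) - 1/2 = 1/2 := by norm_num
    have hg : HasDerivAt D1 (D2 (1/2 : ℂ)) ((1:ℂ) - 1/2) := by rw [e]; exact hD1_half
    simpa [Function.comp_def] using hg.comp (1/2:ℂ) hsub
  have hL : deriv (deriv (fun s : ℂ => G s * G (1 - s))) (1/2) =
      2 * (↑(Real.sqrt π) : ℂ) * D2 (1/2) - 2 * D1 (1/2) ^ 2 := by
    rw [hev.deriv_eq]
    have h := ((hD1_half.fun_mul hGm2).fun_sub (hG_half.fun_mul hD1m2)).deriv
    rw [h]
    have e : (1:ℂ) - 1/2 = 1/2 := by norm_num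
    rw [e, Gamma_half]; ring
  -- derivative of RHS near 1/2
  have hev2 : deriv (fun s : ℂ => ↑π / Complex.sin (↑π * s)) =ᶠ[𝓝 (1/2 : ℂ)]
      fun s => -(↑π * (Complex.cos (↑π * s) * ↑π)) / Complex.sin (↑π * s)^2 := by
    filter_upwards [mem_nhds_half] with s hs
    have := ((hasDerivAt_const s (↑π : ℂ)).fun_div (hasDerivAt_sinpi s) (sin_ne_zero hs)).deriv
    rw [this]; ring
  have hR : deriv (deriv (fun s : ℂ => ↑π / Complex.sin (↑π * s))) (1/2) = (↑π:ℂ)^3 := by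
    rw [hev2.deriv_eq]
    have hcos : HasDerivAt (fun z : ℂ => Complex.cos (↑π * z))
        (-Complex.sin (↑π * (1/2:ℂ)) * ↑π) (1/2 : ℂ) := by
      simpa [Function.comp_def] using (Complex.hasDerivAt_cos (↑π * (1/2:ℂ))).comp (1/2:ℂ)
        ((hasDerivAt_id (1/2:ℂ)).const_mul (↑π : ℂ))
    have hu : HasDerivAt (fun s : ℂ => -(↑π * (Complex.cos (↑π * s) * ↑π)))
        (-(↑π * ((-Complex.sin (↑π * (1/2:ℂ)) * ↑π) * ↑π))) (1/2 : ℂ) :=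
      ((hcos.mul_const (↑π:ℂ)).const_mul (↑π:ℂ)).neg
    have hv : HasDerivAt (fun s : ℂ => Complex.sin (↑π * s)^2)
        (2 * Complex.sin (↑π * (1/2:ℂ))^1 * (Complex.cos (↑π * (1/2:ℂ)) * ↑π)) (1/2 : ℂ) := by
      simpa using (hasDerivAt_sinpi (1/2:ℂ)).fun_pow 2
    have hne : Complex.sin (↑π * (1/2:ℂ))^2 ≠ 0 := by rw [sin_half]; norm_num
    have := (hu.fun_div hv hne).deriv
    rw [this, sin_half, cos_half]
    ring
  calc 2 * (↑(Real.sqrt π) : ℂ) * D2 (1/2) - 2 * D1 (1/2) ^ 2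
      = deriv (deriv (fun s : ℂ => G s * G (1 - s))) (1/2) := hL.symm
    _ = deriv (deriv (fun s : ℂ => ↑π / Complex.sin (↑π * s))) (1/2) := by rw [hFG]
    _ = (↑π:ℂ)^3 := hR

/-- Equation (i): from the duplication formula. -/
lemma eq_i : D2 (1/2) + 2 * D1 (1/2) * D1 1 + (↑(Real.sqrt π) : ℂ) * D2 1 =
    (4 * D2 1 - 8 * Complex.log 2 * D1 1 + 4 * Complex.log 2 ^ 2) * ↑(Real.sqrt π) := by
  set L := Complex.log 2 with hL
  have hPQ : (fun s : ℂ => G s * G (s + 1/2)) =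
      fun s : ℂ => G (2*s) * Complex.exp (L * (1 - 2*s)) * ↑(Real.sqrt π) := by
    funext s
    rw [Complex.Gamma_mul_Gamma_add_half s, Complex.cpow_def_of_ne_zero two_ne_zero]
  have memV : {s : ℂ | 0 < s.re} ∈ 𝓝 (1/2 : ℂ) :=
    isOpen_V.mem_nhds (by norm_num [re_half])
  -- auxiliary derivative builders
  have hadd : ∀ s : ℂ, HasDerivAt (fun z : ℂ => z + 1/2) 1 s := fun s => by
    simpa using (hasDerivAt_id s).add_const (1/2 : ℂ)
  have hmul2 : ∀ s : ℂ, HasDerivAt (fun z : ℂ => 2*z) 2 s := fun s => by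
    simpa using (hasDerivAt_id s).const_mul (2:ℂ)
  have hEat : ∀ s : ℂ, HasDerivAt (fun z : ℂ => Complex.exp (L * (1 - 2*z)))
      (Complex.exp (L * (1 - 2*s)) * (L * (-2))) s := by
    intro s
    have hin : HasDerivAt (fun z : ℂ => L * (1 - 2*z)) (L * (-2)) s := by
      have : HasDerivAt (fun z : ℂ => 1 - 2*z) (-2) s := by
        simpa using (hasDerivAt_const s (1:ℂ)).fun_sub ((hasDerivAt_id s).const_mul (2:ℂ))
      simpa using this.const_mul L
    simpa [Function.comp_def] using (Complex.hasDerivAt_exp (L * (1 - 2*s))).comp s hin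
  -- LHS second derivative
  have hev : deriv (fun s : ℂ => G s * G (s + 1/2)) =ᶠ[𝓝 (1/2 : ℂ)]
      fun s => D1 s * G (s + 1/2) + G s * D1 (s + 1/2) := by
    filter_upwards [memV] with s hs
    have h2 : (0:ℝ) < (s + 1/2).re := by
      simp only [Complex.add_re, re_half]; linarith [hs]
    have hGp : HasDerivAt (fun z : ℂ => G (z + 1/2)) (D1 (s + 1/2)) s := by
      simpa [Function.comp_def] using (hG h2).comp s (hadd s)
    have := ((hG hs).fun_mul hGp).deriv
    rw [this]
  have hGp2 : HasDerivAt (fun z : ℂ => G (z + 1/2)) (D1 1) (1/2 : ℂ) := by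
    have e : (1/2 : ℂ) + 1/2 = 1 := by norm_num
    have hg : HasDerivAt G (D1 (1:ℂ)) ((1/2:ℂ) + 1/2) := by rw [e]; exact hG_one
    have h : HasDerivAt (G ∘ fun z : ℂ => z + 1/2) (D1 (1:ℂ) * 1) (1/2:ℂ) :=
      HasDerivAt.comp _ hg (hadd _)
    simpa [Function.comp_def] using h
  have hD1p2 : HasDerivAt (fun z : ℂ => D1 (z + 1/2)) (D2 1) (1/2 : ℂ) := by
    have e : (1/2 : ℂ) + 1/2 = 1 := by norm_num
    have hg : HasDerivAt D1 (D2 (1:ℂ)) ((1/2:ℂ) + 1/2) := by rw [e]; exact hD1_one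
    have h : HasDerivAt (D1 ∘ fun z : ℂ => z + 1/2) (D2 (1:ℂ) * 1) (1/2:ℂ) :=
      HasDerivAt.comp _ hg (hadd _)
    simpa [Function.comp_def] using h
  have hLHS : deriv (deriv (fun s : ℂ => G s * G (s + 1/2))) (1/2) =
      D2 (1/2) + 2 * D1 (1/2) * D1 1 + (↑(Real.sqrt π) : ℂ) * D2 1 := by
    rw [hev.deriv_eq]
    have h := ((hD1_half.fun_mul hGp2).fun_add (hG_half.fun_mul hD1p2)).deriv
    rw [h]
    have e : (1/2 : ℂ) + 1/2 = 1 := by norm_num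
    rw [e, Complex.Gamma_one, Gamma_half]; ring
  -- RHS second derivative
  have hev2 : deriv (fun s : ℂ => G (2*s) * Complex.exp (L * (1 - 2*s)) * ↑(Real.sqrt π))
      =ᶠ[𝓝 (1/2 : ℂ)] fun s => (D1 (2*s) * 2 * Complex.exp (L * (1 - 2*s)) +
        G (2*s) * (Complex.exp (L * (1 - 2*s)) * (L * (-2)))) * ↑(Real.sqrt π) := by
    filter_upwards [memV] with s hs
    have h2 : (0:ℝ) < (2*s : ℂ).re := by
      have : (2*s : ℂ).re = 2 * s.re := by simp [Complex.mul_re]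
      rw [this]; linarith [hs]
    have hG2 : HasDerivAt (fun z : ℂ => G (2*z)) (D1 (2*s) * 2) s :=
      (hG h2).comp s (hmul2 s)
    exact (((hG2.mul (hEat s)).mul_const _)).deriv
  have hG2h : HasDerivAt (fun z : ℂ => G (2*z)) (D1 1 * 2) (1/2 : ℂ) := by
    have e : (2:ℂ) * (1/2) = 1 := by norm_num
    have hg : HasDerivAt G (D1 (1:ℂ)) ((2:ℂ) * (1/2)) := by rw [e]; exact hG_one
    exact hg.comp (1/2:ℂ) (hmul2 (1/2:ℂ))
  have hD2h : HasDerivAt (fun z : ℂ => D1 (2*z)) (D2 1 * 2) (1/2 : ℂ) := by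
    have e : (2:ℂ) * (1/2) = 1 := by norm_num
    have hg : HasDerivAt D1 (D2 (1:ℂ)) ((2:ℂ) * (1/2)) := by rw [e]; exact hD1_one
    exact hg.comp (1/2:ℂ) (hmul2 (1/2:ℂ))
  have hA : HasDerivAt (fun s : ℂ => D1 (2*s) * 2) (D2 1 * 2 * 2) (1/2 : ℂ) :=
    hD2h.mul_const 2
  have hRHS : deriv (fun s : ℂ => (D1 (2*s) * 2 * Complex.exp (L * (1 - 2*s)) +
        G (2*s) * (Complex.exp (L * (1 - 2*s)) * (L * (-2)))) * ↑(Real.sqrt π)) (1/2) =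
      (4 * D2 1 - 8 * L * D1 1 + 4 * L ^ 2) * ↑(Real.sqrt π) := by
    have hB := hEat (1/2 : ℂ)
    have h := (((hA.fun_mul hB).fun_add (hG2h.fun_mul (hB.mul_const (L * (-2))))).mul_const
      (↑(Real.sqrt π) : ℂ)).deriv
    rw [h]
    have e0 : L * (1 - 2*(1/2:ℂ)) = 0 := by norm_num
    have e1 : (2:ℂ) * (1/2) = 1 := by norm_num
    rw [e0, e1, Complex.exp_zero, Complex.Gamma_one]
    ring
  calc D2 (1/2) + 2 * D1 (1/2) * D1 1 + (↑(Real.sqrt π) : ℂ) * D2 1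
      = deriv (deriv (fun s : ℂ => G s * G (s + 1/2))) (1/2) := hLHS.symm
    _ = deriv (deriv (fun s : ℂ => G (2*s) * Complex.exp (L * (1 - 2*s)) * ↑(Real.sqrt π)))
        (1/2) := by rw [hPQ]
    _ = (4 * D2 1 - 8 * L * D1 1 + 4 * L ^ 2) * ↑(Real.sqrt π) := by
        rw [hev2.deriv_eq]; exact hRHS

/-- The key value: `Γ''(1) = γ² + π²/6`. -/
lemma D2_one : D2 1 = (↑(Real.eulerMascheroniConstant) : ℂ)^2 + (↑π : ℂ)^2 / 6 := by
  have h2 := eq_ii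
  have h1 := eq_i
  have hd1 : D1 1 = -(↑(Real.eulerMascheroniConstant) : ℂ) :=
    Complex.hasDerivAt_Gamma_one.deriv
  have hdh : D1 (1/2 : ℂ) = -↑(Real.sqrt π) *
      ((↑(Real.eulerMascheroniConstant) : ℂ) + 2 * Complex.log 2) :=
    Complex.hasDerivAt_Gamma_one_half.deriv
  set a : ℂ := (↑(Real.eulerMascheroniConstant) : ℂ)
  set L : ℂ := Complex.log 2
  set r : ℂ := (↑(Real.sqrt π) : ℂ)
  set x : ℂ := D2 1
  set y : ℂ := D2 (1/2)
  have hr2 : r^2 = (↑π : ℂ) := by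
    rw [show r^2 = ((Real.sqrt π ^ 2 : ℝ) : ℂ) by push_cast; ring,
      Real.sq_sqrt Real.pi_pos.le]
  have hrne : r ≠ 0 := by
    simp only [r, ne_eq, Complex.ofReal_eq_zero]
    positivity
  rw [hd1, hdh] at h1
  rw [hdh] at h2
  rw [← hr2] at h2 ⊢
  have h6 : (6*r^2) * x = (6*r^2) * (a^2 + (r^2)^2/6) := by
    linear_combination h2 - 2*r*h1
  have hne : (6:ℂ)*r^2 ≠ 0 := by
    exact mul_ne_zero (by norm_num) (pow_ne_zero _ hrne)
  exact mul_left_cancel₀ hne h6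

/-! ### Part B: the integrals `∫ log t · e⁻ᵗ` and `∫ (log t)² · e⁻ᵗ` -/

def f0 : ℝ → ℂ := fun t => ↑(Real.exp (-t))

def f1 : ℝ → ℂ := fun t => Real.log t • f0 t

lemma f0_cont : Continuous f0 :=
  Complex.continuous_ofReal.comp (Real.continuous_exp.comp continuous_neg)

lemma f0_top (a : ℝ) : f0 =O[atTop] (· ^ (-a : ℝ)) := by
  rw [← Asymptotics.isBigO_norm_left]
  simp_rw [f0, Complex.norm_real,
    Asymptotics.isBigO_norm_left]
  simpa only [neg_one_mul] using
    (isLittleO_exp_neg_mul_rpow_atTop zero_lt_one _).isBigO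

lemma f0_bot : f0 =O[𝓝[>] (0:ℝ)] (· ^ (-(0:ℝ) : ℝ)) := by
  simp_rw [neg_zero, Real.rpow_zero]
  refine Asymptotics.isBigO_const_of_tendsto (?_ : Tendsto _ _ (𝓝 (1 : ℂ))) one_ne_zero
  rw [(by simp : (1 : ℂ) = ↑(Real.exp (-0)))]
  exact (f0_cont).continuousWithinAt

lemma f0_loc : LocallyIntegrableOn f0 (Set.Ioi 0) :=
  (f0_cont.continuousOn).locallyIntegrableOn measurableSet_Ioi

lemma f1_loc : LocallyIntegrableOn f1 (Set.Ioi 0) := by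
  refine ContinuousOn.locallyIntegrableOn ?_ measurableSet_Ioi
  exact (Real.continuousOn_log.mono fun x hx => ne_of_gt hx).smul f0_cont.continuousOn

lemma pack0 : MellinConvergent (fun t => Real.log t • f0 t) 1 ∧
    HasDerivAt (mellin f0) (mellin (fun t => Real.log t • f0 t) 1) 1 := by
  refine mellin_hasDerivAt_of_isBigO_rpow (a := 2) (b := 0) f0_loc (f0_top 2) ?_ f0_bot ?_
  · norm_num
  · norm_num

lemma pack1 : MellinConvergent (fun t => Real.log t • f1 t) 1 ∧
    HasDerivAt (mellin f1) (mellin (fun t => Real.log t • f1 t) 1) 1 := by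
  refine mellin_hasDerivAt_of_isBigO_rpow (a := 2) (b := 1/2) f1_loc ?_ ?_ ?_ ?_
  · exact isBigO_rpow_top_log_smul (by norm_num : (2:ℝ) < 3) (f0_top 3)
  · norm_num
  · exact isBigO_rpow_zero_log_smul (by norm_num : (0:ℝ) < 1/2) f0_bot
  · norm_num

lemma mellin_f1_eq (s : ℂ) : mellin f1 s =
    ∫ t : ℝ in Set.Ioi 0, (t:ℂ) ^ (s - 1) * (↑(Real.log t) * ↑(Real.exp (-t))) := by
  simp_rw [mellin, f1, f0, smul_eq_mul, Complex.real_smul]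

lemma deriv_Gamma_eq_mellin {s : ℂ} (hs : 0 < s.re) :
    deriv Complex.Gamma s = mellin f1 s := by
  have h1 : Complex.Gamma =ᶠ[𝓝 s] Complex.GammaIntegral := by
    filter_upwards [isOpen_V.mem_nhds hs] with z hz
    exact Complex.Gamma_eq_integral hz
  rw [h1.deriv_eq, (Complex.hasDerivAt_GammaIntegral hs).deriv, mellin_f1_eq]

lemma D1_ev : deriv Complex.Gamma =ᶠ[𝓝 (1:ℂ)] mellin f1 := by
  filter_upwards [isOpen_V.mem_nhds (by norm_num : (0:ℝ) < (1:ℂ).re)] with z hz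
  exact deriv_Gamma_eq_mellin hz

lemma M1 : ∫ t : ℝ in Set.Ioi 0, Real.log t * Real.exp (-t) =
    -Real.eulerMascheroniConstant := by
  have h := (deriv_Gamma_eq_mellin (s := 1) (by norm_num)).symm
  rw [Complex.hasDerivAt_Gamma_one.deriv, mellin_f1_eq] at h
  have h2 : (∫ t : ℝ in Set.Ioi 0, (t:ℂ) ^ ((1:ℂ) - 1) * (↑(Real.log t) * ↑(Real.exp (-t))))
      = ((∫ t : ℝ in Set.Ioi 0, Real.log t * Real.exp (-t) : ℝ) : ℂ) :=
    calc (∫ t : ℝ in Set.Ioi 0, (t:ℂ) ^ ((1:ℂ) - 1) * (↑(Real.log t) * ↑(Real.exp (-t))))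
        = ∫ t : ℝ in Set.Ioi 0, ((Real.log t * Real.exp (-t) : ℝ) : ℂ) := by
          refine setIntegral_congr_fun measurableSet_Ioi fun t ht => ?_
          simp only [sub_self, Complex.cpow_zero, one_mul]
          push_cast; ring
      _ = _ := integral_ofReal (𝕜 := ℂ)
  rw [h2] at h
  exact_mod_cast h

lemma M2 : ∫ t : ℝ in Set.Ioi 0, (Real.log t)^2 * Real.exp (-t) =
    Real.eulerMascheroniConstant ^ 2 + π ^ 2 / 6 := by
  have h0 : deriv (deriv Complex.Gamma) 1 = mellin (fun t => Real.log t • f1 t) 1 := by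
    rw [D1_ev.deriv_eq, pack1.2.deriv]
  have h2 : mellin (fun t => Real.log t • f1 t) 1
      = ((∫ t : ℝ in Set.Ioi 0, (Real.log t)^2 * Real.exp (-t) : ℝ) : ℂ) := by
    rw [mellin]
    calc (∫ t : ℝ in Set.Ioi 0, (t:ℂ) ^ ((1:ℂ) - 1) • (Real.log t • f1 t))
        = ∫ t : ℝ in Set.Ioi 0, (((Real.log t)^2 * Real.exp (-t) : ℝ) : ℂ) := by
          refine setIntegral_congr_fun measurableSet_Ioi fun t ht => ?_
          simp only [sub_self, Complex.cpow_zero, one_smul, f1, f0]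
          push_cast [Complex.real_smul]
          ring
      _ = _ := integral_ofReal (𝕜 := ℂ)
  rw [h2, D2_one] at h0
  have := h0.symm
  rw [show ((↑Real.eulerMascheroniConstant : ℂ))^2 + (↑π : ℂ)^2/6
      = ((Real.eulerMascheroniConstant ^ 2 + π ^ 2 / 6 : ℝ) : ℂ) by push_cast; ring] at this
  exact_mod_cast this

lemma Int1 : IntegrableOn (fun t => Real.log t * Real.exp (-t)) (Set.Ioi (0:ℝ)) := by
  have h := pack0.1
  unfold MellinConvergent at h
  have h' : IntegrableOn (fun t : ℝ =>
      ((Real.log t * Real.exp (-t) : ℝ) : ℂ)) (Set.Ioi 0) := by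
    refine h.congr_fun ?_ measurableSet_Ioi
    intro t ht
    simp only [sub_self, Complex.cpow_zero, one_smul, f0]
    push_cast [Complex.real_smul]
    ring
  simpa only [Complex.ofReal_re, RCLike.re_to_complex, RCLike.ofReal_re, IntegrableOn] using h'.re

lemma Int2 : IntegrableOn (fun t => (Real.log t)^2 * Real.exp (-t)) (Set.Ioi (0:ℝ)) := by
  have h := pack1.1
  unfold MellinConvergent at h
  have h' : IntegrableOn (fun t : ℝ =>
      (((Real.log t)^2 * Real.exp (-t) : ℝ) : ℂ)) (Set.Ioi 0) := by
    refine h.congr_fun ?_ measurableSet_Ioi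
    intro t ht
    simp only [sub_self, Complex.cpow_zero, one_smul, f1, f0]
    push_cast [Complex.real_smul]
    ring
  simpa only [Complex.ofReal_re, RCLike.re_to_complex, RCLike.ofReal_re, IntegrableOn] using h'.re

/-! ### Part C: change of variables and the main theorem -/

lemma exp_neg_int : IntegrableOn (fun t : ℝ => Real.exp (-t)) (Set.Ioi (0:ℝ)) := by
  have h := exp_neg_integrableOn_Ioi 0 (one_pos : (0:ℝ) < 1)
  simpa using h

lemma image_phi {n : ℕ} (hn : 1 ≤ n) :
    (fun t : ℝ => 1 - Real.exp (-t / n)) '' Set.Ioi 0 = Set.Ioo (0:ℝ) 1 := by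
  have hn' : (0:ℝ) < n := by exact_mod_cast hn
  ext z
  constructor
  · rintro ⟨t, ht, rfl⟩
    have ht' : (0:ℝ) < t := ht
    have h1 : Real.exp (-t / n) < 1 := by
      apply Real.exp_lt_one_iff.mpr
      have h0 : 0 < t / n := div_pos ht' hn'
      rw [neg_div]
      linarith
    have h2 : (0:ℝ) < Real.exp (-t / n) := Real.exp_pos _
    exact ⟨by linarith, by linarith⟩
  · intro hz
    refine ⟨-((n:ℝ) * Real.log (1 - z)), ?_, ?_⟩
    · have hlog : Real.log (1 - z) < 0 := Real.log_neg (by linarith [hz.2]) (by linarith [hz.1])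
      have : (n:ℝ) * Real.log (1 - z) < 0 := mul_neg_of_pos_of_neg hn' hlog
      simpa using this
    · have h1z : (0:ℝ) < 1 - z := by linarith [hz.2]
      have heq : -(-((n:ℝ) * Real.log (1 - z))) / n = Real.log (1 - z) := by
        field_simp
      show 1 - Real.exp (-(-((n:ℝ) * Real.log (1 - z))) / n) = z
      rw [heq, Real.exp_log h1z]
      ring

lemma cov {n : ℕ} (hn : 1 ≤ n) (p : ℕ) :
    ∫ z in Set.Ioo (0 : ℝ) 1,
        (Real.log (-Real.log (1 - z))) ^ p * ((n : ℝ) * (1 - z) ^ (n - 1)) =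
    ∫ t in Set.Ioi (0:ℝ), (Real.log t - Real.log n) ^ p * Real.exp (-t) := by
  have hn' : (0:ℝ) < n := by exact_mod_cast hn
  have hderiv : ∀ t ∈ Set.Ioi (0:ℝ),
      HasDerivWithinAt (fun t : ℝ => 1 - Real.exp (-t / n))
        (Real.exp (-t / n) / n) (Set.Ioi 0) t := by
    intro t ht
    have h1 : HasDerivAt (fun t : ℝ => -t / (n:ℝ)) (-1 / n) t :=
      (hasDerivAt_id t).neg.div_const n
    have hexp : HasDerivAt (fun t : ℝ => Real.exp (-t / n))
        (Real.exp (-t / n) * (-1 / n)) t := (Real.hasDerivAt_exp _).comp t h1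
    have h2 := (hasDerivAt_const t (1:ℝ)).fun_sub hexp
    have h3 : HasDerivAt (fun t : ℝ => 1 - Real.exp (-t / n)) (Real.exp (-t / n) / n) t := by
      exact h2.congr_deriv (by ring)
    exact h3.hasDerivWithinAt
  have hinj : Set.InjOn (fun t : ℝ => 1 - Real.exp (-t / n)) (Set.Ioi 0) := by
    intro a _ b _ h
    simp only [sub_right_inj] at h
    have h2 := Real.exp_injective h
    have hne : (n:ℝ) ≠ 0 := ne_of_gt hn'
    field_simp at h2
    linarith
  rw [← image_phi hn, integral_image_eq_integral_abs_deriv_smul measurableSet_Ioi hderiv hinj]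
  refine setIntegral_congr_fun measurableSet_Ioi fun t ht => ?_
  have ht' : (0:ℝ) < t := ht
  have he : (0:ℝ) < Real.exp (-t / n) := Real.exp_pos _
  have h1 : (1:ℝ) - (1 - Real.exp (-t / n)) = Real.exp (-t / n) := by ring
  have h2 : -Real.log (Real.exp (-t / n)) = t / n := by rw [Real.log_exp]; ring
  have h3 : Real.log (t / n) = Real.log t - Real.log n :=
    Real.log_div (ne_of_gt ht') (ne_of_gt hn')
  have h4 : Real.exp (-t / n) ^ (n - 1) * Real.exp (-t / n) = Real.exp (-t) := by
    rw [← pow_succ, Nat.sub_add_cancel hn, ← Real.exp_nat_mul]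
    congr 1
    field_simp
  simp only [smul_eq_mul, h1, h2, h3]
  rw [abs_of_pos (div_pos he hn')]
  field_simp
  calc Real.exp (-(t / ↑n)) * (Real.log t - Real.log ↑n) ^ p * Real.exp (-(t / ↑n)) ^ (n - 1)
      = (Real.log t - Real.log ↑n) ^ p * (Real.exp (-t / n) ^ (n-1) * Real.exp (-t/n)) := by
        rw [neg_div]; ring
    _ = (Real.log t - Real.log ↑n) ^ p * Real.exp (-t) := by rw [h4]

end BetaAux

/-- For `Z ~ Beta(1, n)`, `E[(log(-log(1-Z)))²] = π²/6 + (γ + log n)²` and consequently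
`Var(log(-log(1-Z))) = π²/6`. -/
theorem beta_one_n_loglog_sq_and_var (n : ℕ) (hn : 1 ≤ n) :
    (∫ z in Set.Ioo (0 : ℝ) 1,
        (Real.log (-Real.log (1 - z))) ^ 2 * ((n : ℝ) * (1 - z) ^ (n - 1))) =
      Real.pi ^ 2 / 6 + (Real.eulerMascheroniConstant + Real.log n) ^ 2 ∧
    (∫ z in Set.Ioo (0 : ℝ) 1,
        (Real.log (-Real.log (1 - z))) ^ 2 * ((n : ℝ) * (1 - z) ^ (n - 1))) -
      (∫ z in Set.Ioo (0 : ℝ) 1,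
        Real.log (-Real.log (1 - z)) * ((n : ℝ) * (1 - z) ^ (n - 1))) ^ 2 =
      Real.pi ^ 2 / 6 := by
  classical
  set c := Real.log n with hc
  have hg1 : IntegrableOn (fun t : ℝ => (2*c) * (Real.log t * Real.exp (-t)))
      (Set.Ioi (0:ℝ)) := (BetaAux.Int1.const_mul _)
  have hg2 : IntegrableOn (fun t : ℝ => c^2 * Real.exp (-t)) (Set.Ioi (0:ℝ)) :=
    (BetaAux.exp_neg_int.const_mul _)
  have hB : (∫ z in Set.Ioo (0 : ℝ) 1,
      (Real.log (-Real.log (1 - z))) ^ 2 * ((n : ℝ) * (1 - z) ^ (n - 1))) =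
      Real.pi ^ 2 / 6 + (Real.eulerMascheroniConstant + c) ^ 2 := by
    rw [BetaAux.cov hn 2]
    have e1 : ∀ t : ℝ, (Real.log t - c)^2 * Real.exp (-t) =
        ((Real.log t)^2 * Real.exp (-t)) - (2*c) * (Real.log t * Real.exp (-t))
          + c^2 * Real.exp (-t) := fun t => by ring
    simp_rw [← hc, e1]
    have hsub : Integrable (fun t : ℝ => (Real.log t)^2 * Real.exp (-t)
        - (2*c) * (Real.log t * Real.exp (-t))) (volume.restrict (Set.Ioi 0)) :=
      BetaAux.Int2.sub hg1
    rw [integral_add hsub hg2, integral_sub BetaAux.Int2 hg1,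
      integral_const_mul, integral_const_mul, BetaAux.M1, BetaAux.M2,
      integral_exp_neg_Ioi_zero]
    ring
  have hA : (∫ z in Set.Ioo (0 : ℝ) 1,
      Real.log (-Real.log (1 - z)) * ((n : ℝ) * (1 - z) ^ (n - 1))) =
      -(Real.eulerMascheroniConstant + c) := by
    have h := BetaAux.cov hn 1
    simp only [pow_one] at h
    rw [h]
    have e1 : ∀ t : ℝ, (Real.log t - c) * Real.exp (-t) =
        (Real.log t * Real.exp (-t)) - c * Real.exp (-t) := fun t => by ring
    simp_rw [← hc, e1]
    rw [integral_sub BetaAux.Int1 (BetaAux.exp_neg_int.const_mul _),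
      integral_const_mul, BetaAux.M1, integral_exp_neg_Ioi_zero]
    ring
  refine ⟨hB, ?_⟩
  rw [hB, hA]
  ring
end
end
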